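/- Let g(x) = ‖x‖₂ on ℝ^n and ν > 0. Then for every x ∈ ℝ^n, the B-subdifferential of the proximal map satisfies: ∂_B prox_{νg}(x) = {O} if ‖x‖₂ < ν; ∂_B prox_{νg}(x) = { (ν/‖x‖₂)(xxᵀ/‖x‖₂² − I) + I } if ‖x‖₂ > ν; and ∂_B prox_{νg}(x) = { O, xxᵀ/‖x‖₂² } if ‖x‖₂ = ν, where O denotes the n×n zero matrix and I the identity matrix. -/

import Mathlib

open Filter Topology RealInnerProductSpace

namespace Stmt5Aux

variable {n : ℕ}

local notation "E" => EuclideanSpace ℝ (Fin n)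

noncomputable def soft (ν : ℝ) (y : E) : E :=
  if ‖y‖ ≤ ν then 0 else (1 - ν / ‖y‖) • y

noncomputable def Aop (ν : ℝ) (y : E) : EuclideanSpace ℝ (Fin n) →L[ℝ] EuclideanSpace ℝ (Fin n) :=
  (1 - ν / ‖y‖) • ContinuousLinearMap.id ℝ (EuclideanSpace ℝ (Fin n)) +
    ((ν / ‖y‖ ^ 3) • innerSL ℝ y).smulRight y

lemma eq_soft_of_le {ν : ℝ} (hν : 0 < ν) (x z : E)
    (h : ν * ‖z‖ + ‖z - x‖ ^ 2 / 2 ≤ ν * ‖soft ν x‖ + ‖soft ν x - x‖ ^ 2 / 2) :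
    z = soft ν x := by
  have hzx : ⟪z, x⟫ ≤ ‖z‖ * ‖x‖ := real_inner_le_norm z x
  have hzexp : ‖z - x‖ ^ 2 = ‖z‖ ^ 2 - 2 * ⟪z, x⟫ + ‖x‖ ^ 2 := norm_sub_sq_real z x
  by_cases hx : ‖x‖ ≤ ν
  · simp only [soft, if_pos hx, norm_zero, zero_sub, norm_neg, mul_zero, zero_add] at h ⊢
    have h1 : ‖z‖ * ‖x‖ ≤ ‖z‖ * ν := mul_le_mul_of_nonneg_left hx (norm_nonneg z)
    have h2 : ‖z‖ ^ 2 ≤ 0 := by nlinarith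
    have h3 : ‖z‖ = 0 := by nlinarith [norm_nonneg z, sq_nonneg ‖z‖]
    exact norm_eq_zero.mp h3
  · push_neg at hx
    have hx0 : ‖x‖ ≠ 0 := ne_of_gt (hν.trans hx)
    have hcoef : (0:ℝ) ≤ 1 - ν / ‖x‖ := by
      rw [sub_nonneg, div_le_one (by positivity)]; exact hx.le
    have hs : ‖soft ν x‖ = ‖x‖ - ν := by
      rw [soft, if_neg (not_le.mpr hx), norm_smul, Real.norm_eq_abs, abs_of_nonneg hcoef]
      field_simp
    have hsx : ‖soft ν x - x‖ = ν := by
      have : soft ν x - x = (-(ν / ‖x‖)) • x := by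
        rw [soft, if_neg (not_le.mpr hx)]
        rw [sub_smul, one_smul, neg_smul]; abel
      rw [this, norm_smul, Real.norm_eq_abs, abs_neg, abs_of_nonneg (by positivity)]
      field_simp
    rw [hs, hsx] at h
    -- equality analysis
    have key : ν * ‖z‖ + (‖z‖ ^ 2 - 2 * ⟪z, x⟫ + ‖x‖ ^ 2) / 2 ≤ ν * (‖x‖ - ν) + ν ^ 2 / 2 := by
      rw [hzexp] at h; linarith
    have h1 : ‖z‖ * ‖x‖ - ⟪z, x⟫ ≤ 0 := by nlinarith [sq_nonneg (‖z‖ - ‖x‖ + ν)]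
    have h1' : ⟪z, x⟫ = ‖z‖ * ‖x‖ := le_antisymm hzx (by linarith)
    have h2 : (‖z‖ - (‖x‖ - ν)) ^ 2 ≤ 0 := by nlinarith
    have h2' : ‖z‖ = ‖x‖ - ν := by nlinarith [sq_nonneg (‖z‖ - (‖x‖ - ν))]
    have h3 : ‖x‖ • z = ‖z‖ • x := inner_eq_norm_mul_iff_real.mp h1'
    have : z = (‖z‖ / ‖x‖) • x := by
      rw [div_eq_inv_mul, mul_smul, ← h3, inv_smul_smul₀ hx0]
    rw [this, soft, if_neg (not_le.mpr hx), h2']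
    congr 1
    field_simp

lemma Aop_apply (ν : ℝ) (y z : E) :
    Aop ν y z = (1 - ν / ‖y‖) • z + (ν / ‖y‖ ^ 3 * ⟪y, z⟫) • y := by
  simp [Aop]

lemma hasFDerivAt_soft_small {ν : ℝ} {y : E} (hy : ‖y‖ < ν) :
    HasFDerivAt (soft ν) (0 : EuclideanSpace ℝ (Fin n) →L[ℝ] EuclideanSpace ℝ (Fin n)) y := by
  have hmem : {w : E | ‖w‖ < ν} ∈ 𝓝 y :=
    (isOpen_lt continuous_norm continuous_const).mem_nhds hy
  have heq : soft ν =ᶠ[𝓝 y] fun _ => (0 : E) :=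
    Filter.eventuallyEq_of_mem hmem fun w hw => by
      simp only [Set.mem_setOf_eq] at hw
      simp only [soft, if_pos hw.le]
  exact (hasFDerivAt_const (0 : E) y).congr_of_eventuallyEq heq

lemma hasFDerivAt_soft_big {ν : ℝ} (hν : 0 < ν) {y : E} (hy : ν < ‖y‖) :
    HasFDerivAt (soft ν) (Aop ν y) y := by
  have hy0 : (0:ℝ) < ‖y‖ := hν.trans hy
  have hy0' : ‖y‖ ≠ 0 := ne_of_gt hy0
  have hq : HasFDerivAt (fun w : E => ‖w‖ ^ 2) (2 • innerSL ℝ y) y :=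
    (hasStrictFDerivAt_norm_sq y).hasFDerivAt
  have hsq : Real.sqrt (‖y‖ ^ 2) = ‖y‖ := Real.sqrt_sq (norm_nonneg y)
  have hsqne : (‖y‖:ℝ) ^ 2 ≠ 0 := by positivity
  have hr : HasDerivAt (fun s : ℝ => 1 - ν * (Real.sqrt s)⁻¹)
      (ν / (2 * ‖y‖ ^ 3)) (‖y‖ ^ 2) := by
    have h1 : HasDerivAt Real.sqrt (1 / (2 * Real.sqrt (‖y‖ ^ 2))) (‖y‖ ^ 2) :=
      Real.hasDerivAt_sqrt hsqne
    have h2 : HasDerivAt (fun s : ℝ => (Real.sqrt s)⁻¹)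
        (-(1 / (2 * Real.sqrt (‖y‖ ^ 2))) / (Real.sqrt (‖y‖ ^ 2)) ^ 2) (‖y‖ ^ 2) :=
      h1.inv (by rw [hsq]; exact hy0')
    have h3 := (h2.const_mul ν).const_sub 1
    refine h3.congr_deriv ?_
    rw [hsq]
    field_simp
  have hφ : HasFDerivAt (fun w : E => 1 - ν * (Real.sqrt (‖w‖ ^ 2))⁻¹)
      ((ν / ‖y‖ ^ 3) • innerSL ℝ y) y := by
    have := hr.comp_hasFDerivAt y hq
    refine this.congr_fderiv ?_
    ext z
    simp only [ContinuousLinearMap.smul_apply, innerSL_apply_apply, smul_eq_mul, two_smul,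
      ContinuousLinearMap.add_apply]
    field_simp
    ring
  have hmain : HasFDerivAt (fun w : E => (1 - ν * (Real.sqrt (‖w‖ ^ 2))⁻¹) • w)
      ((1 - ν * (Real.sqrt (‖y‖ ^ 2))⁻¹) • ContinuousLinearMap.id ℝ (EuclideanSpace ℝ (Fin n)) +
        ((ν / ‖y‖ ^ 3) • innerSL ℝ y).smulRight y) y :=
    hφ.smul (hasFDerivAt_id y)
  have hmem : {w : E | ν < ‖w‖} ∈ 𝓝 y :=
    (isOpen_lt continuous_const continuous_norm).mem_nhds hy
  have heq : soft ν =ᶠ[𝓝 y] fun w => (1 - ν * (Real.sqrt (‖w‖ ^ 2))⁻¹) • w :=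
    Filter.eventuallyEq_of_mem hmem fun w hw => by
      simp only [Set.mem_setOf_eq] at hw
      rw [soft, if_neg (not_le.mpr hw), Real.sqrt_sq (norm_nonneg w), div_eq_mul_inv]
  have h5 := hmain.congr_of_eventuallyEq heq
  convert h5 using 2 <;> simp [Aop, hsq, div_eq_mul_inv]


set_option maxHeartbeats 1000000 in
lemma Aop_continuousAt {ν : ℝ} {x : E} (hx : x ≠ 0) : ContinuousAt (Aop ν) x := by
  have hnx : ‖x‖ ≠ 0 := norm_ne_zero_iff.mpr hx
  have h1 : ContinuousAt (fun y : E => (1 - ν / ‖y‖)) x :=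
    continuousAt_const.sub (continuousAt_const.div continuous_norm.continuousAt hnx)
  have h2 : ContinuousAt (fun y : E => ν / ‖y‖ ^ 3) x :=
    continuousAt_const.div (continuous_norm.pow 3).continuousAt (by positivity)
  have h3 : Continuous (fun y : E => (innerSL ℝ y : EuclideanSpace ℝ (Fin n) →L[ℝ] ℝ)) :=
    (innerSL ℝ).continuous
  have h4 : Continuous (fun p : (EuclideanSpace ℝ (Fin n) →L[ℝ] ℝ) × EuclideanSpace ℝ (Fin n) =>
      (ContinuousLinearMap.smulRightL ℝ (EuclideanSpace ℝ (Fin n)) (EuclideanSpace ℝ (Fin n))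
        p.1) p.2) :=
    (ContinuousLinearMap.smulRightL ℝ (EuclideanSpace ℝ (Fin n))
      (EuclideanSpace ℝ (Fin n))).isBoundedBilinearMap.continuous
  have h5 : ContinuousAt (fun y : E => ((ν / ‖y‖ ^ 3) • innerSL ℝ y).smulRight y) x := by
    have hp : ContinuousAt (fun y : E => ((ν / ‖y‖ ^ 3) • innerSL ℝ y, y)) x :=
      (h2.smul h3.continuousAt).prodMk continuousAt_id
    exact h4.continuousAt.comp hp
  exact (h1.smul continuousAt_const).add h5

lemma not_diff_boundary {ν : ℝ} (hν : 0 < ν) {y : E} (hy : ‖y‖ = ν) :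
    ¬ DifferentiableAt ℝ (soft ν) y := by
  intro h
  have hγ : DifferentiableAt ℝ (fun t : ℝ => y + t • y) 0 :=
    (differentiableAt_id.smul_const y).const_add y
  have hcomp : DifferentiableAt ℝ (fun t : ℝ => soft ν (y + t • y)) 0 := by
    have hcc := DifferentiableAt.comp 0
      (show DifferentiableAt ℝ (soft ν) (y + (0:ℝ) • y) by simpa using h) hγ
    simpa [Function.comp_def] using hcc
  have key : (fun t : ℝ => soft ν (y + t • y)) =ᶠ[𝓝 (0:ℝ)] fun t => max t 0 • y := by
    have hmem : Set.Ioo (-1:ℝ) 1 ∈ 𝓝 (0:ℝ) := Ioo_mem_nhds (by norm_num) (by norm_num)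
    refine Filter.eventuallyEq_of_mem hmem fun t ht => ?_
    obtain ⟨ht1, ht2⟩ := ht
    have h1t : (0:ℝ) < 1 + t := by linarith
    have hyt : y + t • y = (1 + t) • y := by rw [add_smul, one_smul]
    have hnorm : ‖y + t • y‖ = (1 + t) * ν := by
      rw [hyt, norm_smul, Real.norm_eq_abs, abs_of_pos h1t, hy]
    by_cases htt : t ≤ 0
    · have hle : ‖y + t • y‖ ≤ ν := by rw [hnorm]; nlinarith
      rw [soft, if_pos hle, max_eq_right htt, zero_smul]
    · push_neg at htt
      have hgt : ¬ ‖y + t • y‖ ≤ ν := by rw [hnorm]; push_neg; nlinarith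
      rw [soft, if_neg hgt, hnorm, hyt, smul_smul, max_eq_left htt.le]
      congr 1
      field_simp
      ring
  have hmax : DifferentiableAt ℝ (fun t : ℝ => max t 0 • y) 0 :=
    (Filter.EventuallyEq.differentiableAt_iff key).mp hcomp
  have hinner : DifferentiableAt ℝ (fun t : ℝ => (innerSL ℝ y) (max t 0 • y)) 0 :=
    DifferentiableAt.comp 0 ((innerSL ℝ y).differentiableAt) hmax
  have hy0 : ‖y‖ ≠ 0 := by rw [hy]; exact hν.ne'
  have hmax' : DifferentiableAt ℝ (fun t : ℝ => max t 0) 0 := by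
    have heq : (fun t : ℝ => max t 0) =
        fun t => (‖y‖ ^ 2)⁻¹ * ((innerSL ℝ y) (max t 0 • y)) := by
      funext t
      rw [innerSL_apply_apply, real_inner_smul_right, real_inner_self_eq_norm_sq]
      field_simp
    rw [heq]
    exact hinner.const_mul _
  have habs : DifferentiableAt ℝ (abs : ℝ → ℝ) 0 := by
    have heq : (abs : ℝ → ℝ) = fun t => 2 * max t 0 - t := by
      funext t
      rcases le_total t 0 with h' | h'
      · rw [max_eq_right h', abs_of_nonpos h']; ring
      · rw [max_eq_left h', abs_of_nonneg h']; ring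
    rw [heq]
    exact (hmax'.const_mul 2).sub differentiableAt_id
  exact not_differentiableAt_abs_zero habs


lemma Aop_eq_target {ν : ℝ} {x : E} (hx0 : x ≠ 0) (z : E) :
    Aop ν x z = (ν / ‖x‖) • ((⟪x, z⟫ / ‖x‖ ^ 2) • x - z) + z := by
  have hnx : ‖x‖ ≠ 0 := norm_ne_zero_iff.mpr hx0
  rw [Aop_apply, smul_sub, smul_smul]
  have hc : ν / ‖x‖ * (⟪x, z⟫ / ‖x‖ ^ 2) = ν / ‖x‖ ^ 3 * ⟪x, z⟫ := by
    field_simp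
  rw [hc]
  module

lemma Aop_eq_boundary {ν : ℝ} (hν : 0 < ν) {x : E} (hxν : ‖x‖ = ν) (z : E) :
    Aop ν x z = (⟪x, z⟫ / ‖x‖ ^ 2) • x := by
  have hnx : ‖x‖ ≠ 0 := by rw [hxν]; exact hν.ne'
  rw [Aop_apply]
  have h0 : 1 - ν / ‖x‖ = 0 := by rw [hxν]; field_simp; norm_num
  have h1 : ν / ‖x‖ ^ 3 * ⟪x, z⟫ = ⟪x, z⟫ / ‖x‖ ^ 2 := by
    rw [hxν]
    field_simp
  rw [h0, h1, zero_smul, zero_add]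

end Stmt5Aux

/-- The B-subdifferential of a map `F : ℝ^n → ℝ^n` at `x`: the set of limits of
derivatives `∇F(x^(k))` along sequences `x^(k) → x` of differentiability points of `F`. -/
def Bsubdiff {n : ℕ} (F : EuclideanSpace ℝ (Fin n) → EuclideanSpace ℝ (Fin n))
    (x : EuclideanSpace ℝ (Fin n)) :
    Set (EuclideanSpace ℝ (Fin n) →L[ℝ] EuclideanSpace ℝ (Fin n)) :=
  {V | ∃ u : ℕ → EuclideanSpace ℝ (Fin n),
      Filter.Tendsto u Filter.atTop (nhds x) ∧
      (∀ k, DifferentiableAt ℝ F (u k)) ∧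
      Filter.Tendsto (fun k => fderiv ℝ F (u k)) Filter.atTop (nhds V)}

/-- For `g = ‖·‖₂` and `ν > 0`, the B-subdifferential of the proximal
map `prox_{νg}` at `x` equals `{O}` if `‖x‖ < ν`, equals the singleton consisting of
`(ν/‖x‖)(xxᵀ/‖x‖² − I) + I` if `‖x‖ > ν`, and equals `{O, xxᵀ/‖x‖²}` if `‖x‖ = ν`
(operators described through their action on vectors `z`). -/
theorem statement5 {n : ℕ} (ν : ℝ) (hν : 0 < ν)
    (prox : EuclideanSpace ℝ (Fin n) → EuclideanSpace ℝ (Fin n))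
    (hprox : ∀ x, IsMinOn
      (fun z : EuclideanSpace ℝ (Fin n) => ν * ‖z‖ + ‖z - x‖ ^ 2 / 2)
      Set.univ (prox x))
    (x : EuclideanSpace ℝ (Fin n)) :
    (‖x‖ < ν → Bsubdiff prox x = {0}) ∧
    (ν < ‖x‖ → Bsubdiff prox x =
      {V | ∀ z, V z = (ν / ‖x‖) • ((⟪x, z⟫ / ‖x‖ ^ 2) • x - z) + z}) ∧
    (‖x‖ = ν → Bsubdiff prox x =
      {V | (∀ z, V z = 0) ∨ (∀ z, V z = (⟪x, z⟫ / ‖x‖ ^ 2) • x)}) := by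
  have hfun : prox = Stmt5Aux.soft ν := by
    funext w
    exact Stmt5Aux.eq_soft_of_le hν w (prox w)
      ((isMinOn_iff.mp (hprox w)) (Stmt5Aux.soft ν w) (Set.mem_univ _))
  rw [hfun]
  refine ⟨?_, ?_, ?_⟩
  · -- case ‖x‖ < ν
    intro hlt
    ext V
    simp only [Bsubdiff, Set.mem_setOf_eq, Set.mem_singleton_iff]
    constructor
    · rintro ⟨u, hu, hdiff, hconv⟩
      have h1 : ∀ᶠ k in atTop, ‖u k‖ < ν := hu.norm.eventually_lt_const hlt
      have h2 : (fun k => fderiv ℝ (Stmt5Aux.soft ν) (u k)) =ᶠ[atTop]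
          fun _ => (0 : EuclideanSpace ℝ (Fin n) →L[ℝ] EuclideanSpace ℝ (Fin n)) :=
        h1.mono fun k hk => (Stmt5Aux.hasFDerivAt_soft_small hk).fderiv
      exact tendsto_nhds_unique (hconv.congr' h2) tendsto_const_nhds
    · rintro rfl
      refine ⟨fun _ => x, tendsto_const_nhds,
        fun _ => (Stmt5Aux.hasFDerivAt_soft_small hlt).differentiableAt, ?_⟩
      simp only [(Stmt5Aux.hasFDerivAt_soft_small hlt).fderiv]
      exact tendsto_const_nhds
  · -- case ν < ‖x‖
    intro hgt
    have hx0 : x ≠ 0 := by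
      intro h0; rw [h0, norm_zero] at hgt; linarith
    ext V
    simp only [Bsubdiff, Set.mem_setOf_eq]
    constructor
    · rintro ⟨u, hu, hdiff, hconv⟩
      have h1 : ∀ᶠ k in atTop, ν < ‖u k‖ := hu.norm.eventually_const_lt hgt
      have h2 : (fun k => fderiv ℝ (Stmt5Aux.soft ν) (u k)) =ᶠ[atTop]
          fun k => Stmt5Aux.Aop ν (u k) :=
        h1.mono fun k hk => (Stmt5Aux.hasFDerivAt_soft_big hν hk).fderiv
      have h3 : Tendsto (fun k => Stmt5Aux.Aop ν (u k)) atTop (𝓝 V) := hconv.congr' h2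
      have h4 : Tendsto (fun k => Stmt5Aux.Aop ν (u k)) atTop (𝓝 (Stmt5Aux.Aop ν x)) :=
        (Stmt5Aux.Aop_continuousAt hx0).tendsto.comp hu
      have hV : V = Stmt5Aux.Aop ν x := tendsto_nhds_unique h3 h4
      intro z
      rw [hV, Stmt5Aux.Aop_eq_target hx0]
    · intro hV
      have hVA : V = Stmt5Aux.Aop ν x :=
        ContinuousLinearMap.ext fun z => by rw [hV z, Stmt5Aux.Aop_eq_target hx0]
      refine ⟨fun _ => x, tendsto_const_nhds,
        fun _ => (Stmt5Aux.hasFDerivAt_soft_big hν hgt).differentiableAt, ?_⟩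
      simp only [(Stmt5Aux.hasFDerivAt_soft_big hν hgt).fderiv]
      rw [hVA]
      exact tendsto_const_nhds
  · -- case ‖x‖ = ν
    intro heq
    have hx0 : x ≠ 0 := by
      intro h0; rw [h0, norm_zero] at heq; exact hν.ne' heq.symm
    ext V
    simp only [Bsubdiff, Set.mem_setOf_eq]
    constructor
    · rintro ⟨u, hu, hdiff, hconv⟩
      have hne : ∀ k, ‖u k‖ ≠ ν := fun k hk => Stmt5Aux.not_diff_boundary hν hk (hdiff k)
      by_cases hfreq : ∃ᶠ k in atTop, ‖u k‖ < ν
      · left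
        obtain ⟨φ, hφmono, hφ⟩ := Filter.extraction_of_frequently_atTop hfreq
        have hsub : Tendsto (fun k => fderiv ℝ (Stmt5Aux.soft ν) (u (φ k))) atTop (𝓝 V) :=
          hconv.comp hφmono.tendsto_atTop
        have hz : ∀ k, fderiv ℝ (Stmt5Aux.soft ν) (u (φ k)) =
            (0 : EuclideanSpace ℝ (Fin n) →L[ℝ] EuclideanSpace ℝ (Fin n)) :=
          fun k => (Stmt5Aux.hasFDerivAt_soft_small (hφ k)).fderiv
        have hV : V = 0 := tendsto_nhds_unique (hsub.congr hz) tendsto_const_nhds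
        intro z
        rw [hV]
        simp
      · right
        have hev : ∀ᶠ k in atTop, ν < ‖u k‖ := by
          have h' := Filter.not_frequently.mp hfreq
          exact h'.mono fun k hk => lt_of_le_of_ne (not_lt.mp hk) (hne k).symm
        have h2 : (fun k => fderiv ℝ (Stmt5Aux.soft ν) (u k)) =ᶠ[atTop]
            fun k => Stmt5Aux.Aop ν (u k) :=
          hev.mono fun k hk => (Stmt5Aux.hasFDerivAt_soft_big hν hk).fderiv
        have h3 : Tendsto (fun k => Stmt5Aux.Aop ν (u k)) atTop (𝓝 V) := hconv.congr' h2
        have h4 : Tendsto (fun k => Stmt5Aux.Aop ν (u k)) atTop (𝓝 (Stmt5Aux.Aop ν x)) :=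
          (Stmt5Aux.Aop_continuousAt hx0).tendsto.comp hu
        have hV : V = Stmt5Aux.Aop ν x := tendsto_nhds_unique h3 h4
        intro z
        rw [hV, Stmt5Aux.Aop_eq_boundary hν heq]
    · rintro (h0 | hP)
      · have hV : V = 0 := ContinuousLinearMap.ext fun z => by rw [h0 z]; simp
        have hsmall : ∀ k : ℕ, ‖(1 - 1/((k:ℝ)+1)) • x‖ < ν := by
          intro k
          have hk1 : (0:ℝ) < (k:ℝ) + 1 := by positivity
          have hle : 1/((k:ℝ)+1) ≤ 1 := by
            rw [div_le_one hk1]; linarith [Nat.cast_nonneg (α := ℝ) k]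
          have hpos : 0 < 1/((k:ℝ)+1) := by positivity
          rw [norm_smul, Real.norm_eq_abs, abs_of_nonneg (by linarith), heq]
          nlinarith
        refine ⟨fun k => (1 - 1/((k:ℝ)+1)) • x, ?_, ?_, ?_⟩
        · have h1 : Tendsto (fun k : ℕ => 1 - 1/((k:ℝ)+1)) atTop (𝓝 1) := by
            have h2 := tendsto_one_div_add_atTop_nhds_zero_nat (𝕜 := ℝ)
            have := (tendsto_const_nhds : Tendsto (fun _ : ℕ => (1:ℝ)) atTop (𝓝 1)).sub h2
            simpa using this
          have := h1.smul_const x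
          simpa using this
        · exact fun k => (Stmt5Aux.hasFDerivAt_soft_small (hsmall k)).differentiableAt
        · rw [hV]
          have hfd : (fun k : ℕ => fderiv ℝ (Stmt5Aux.soft ν) ((1 - 1/((k:ℝ)+1)) • x)) =
              fun _ => (0 : EuclideanSpace ℝ (Fin n) →L[ℝ] EuclideanSpace ℝ (Fin n)) :=
            funext fun k => (Stmt5Aux.hasFDerivAt_soft_small (hsmall k)).fderiv
          rw [hfd]
          exact tendsto_const_nhds
      · have hVA : V = Stmt5Aux.Aop ν x :=
          ContinuousLinearMap.ext fun z => by rw [hP z, Stmt5Aux.Aop_eq_boundary hν heq]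
        have hbig : ∀ k : ℕ, ν < ‖(1 + 1/((k:ℝ)+1)) • x‖ := by
          intro k
          have hk1 : (0:ℝ) < (k:ℝ) + 1 := by positivity
          have hpos : 0 < 1/((k:ℝ)+1) := by positivity
          rw [norm_smul, Real.norm_eq_abs, abs_of_nonneg (by linarith), heq]
          nlinarith
        refine ⟨fun k => (1 + 1/((k:ℝ)+1)) • x, ?_, ?_, ?_⟩
        · have h1 : Tendsto (fun k : ℕ => 1 + 1/((k:ℝ)+1)) atTop (𝓝 1) := by
            have h2 := tendsto_one_div_add_atTop_nhds_zero_nat (𝕜 := ℝ)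
            have := (tendsto_const_nhds : Tendsto (fun _ : ℕ => (1:ℝ)) atTop (𝓝 1)).add h2
            simpa using this
          have := h1.smul_const x
          simpa using this
        · exact fun k => (Stmt5Aux.hasFDerivAt_soft_big hν (hbig k)).differentiableAt
        · have hfd : (fun k : ℕ => fderiv ℝ (Stmt5Aux.soft ν) ((1 + 1/((k:ℝ)+1)) • x)) =
              fun k : ℕ => Stmt5Aux.Aop ν ((1 + 1/((k:ℝ)+1)) • x) :=
            funext fun k => (Stmt5Aux.hasFDerivAt_soft_big hν (hbig k)).fderiv
          rw [hfd, hVA]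
          have hu : Tendsto (fun k : ℕ => (1 + 1/((k:ℝ)+1)) • x) atTop (𝓝 x) := by
            have h1 : Tendsto (fun k : ℕ => 1 + 1/((k:ℝ)+1)) atTop (𝓝 1) := by
              have h2 := tendsto_one_div_add_atTop_nhds_zero_nat (𝕜 := ℝ)
              have := (tendsto_const_nhds : Tendsto (fun _ : ℕ => (1:ℝ)) atTop (𝓝 1)).add h2
              simpa using this
            have := h1.smul_const x
            simpa using this
          exact (Stmt5Aux.Aop_continuousAt hx0).tendsto.comp hu
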